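/- Let Φ = (G, φ) be a connected T-gain graph on n vertices, and let C_1,…,C_l be the fundamental cycles of G with respect to a spanning tree T. Then E(Φ) ≥ 2 Σ_{j=1}^l Re(φ(C_j)) + (5n − n² − 4), with equality attained when Φ ∼ (K_n, 1). -/

import Mathlib

open Matrix BigOperators
open scoped Classical ComplexOrder

/-- A complex unit gain graph (`𝕋`-gain graph) on a finite vertex type `V`. -/
structure TGainGraph (V : Type*) [Fintype V] [DecidableEq V] where
  G : SimpleGraph V
  A : Matrix V V ℂ
  herm : A.IsHermitian
  unitGain : ∀ i j, G.Adj i j → ‖A i j‖ = 1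
  zeroGain : ∀ i j, ¬ G.Adj i j → A i j = 0

namespace TGainGraph

variable {V : Type*} [Fintype V] [DecidableEq V]

/-- The energy of a `𝕋`-gain graph: sum of absolute values of eigenvalues of `A(Φ)`. -/
noncomputable def energy (Φ : TGainGraph V) : ℝ :=
  ∑ i, |Φ.herm.eigenvalues i|

/-- `|A(Φ)| = (A(Φ) A(Φ)ᴴ)^{1/2}`. -/
noncomputable def absMatrix (Φ : TGainGraph V) : Matrix V V ℂ :=
  (Matrix.posSemidef_self_mul_conjTranspose Φ.A).1.eigenvectorUnitary.1 *
    diagonal ((↑) ∘ (√·) ∘ (Matrix.posSemidef_self_mul_conjTranspose Φ.A).1.eigenvalues) *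
    (star (Matrix.posSemidef_self_mul_conjTranspose Φ.A).1.eigenvectorUnitary : Matrix V V ℂ)

/-- Energy of a vertex: the `(i,i)` entry of `|A(Φ)|`. -/
noncomputable def vertexEnergy (Φ : TGainGraph V) (i : V) : ℝ :=
  (Φ.absMatrix i i).re

/-- Degree of a vertex in the underlying graph. -/
noncomputable def deg (Φ : TGainGraph V) (i : V) : ℕ := Φ.G.degree i

/-- Maximum vertex degree of the underlying graph. -/
noncomputable def maxDeg (Φ : TGainGraph V) : ℕ := Φ.G.maxDegree

/-- Spectral radius of `A(Φ)`. -/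
noncomputable def specRadius (Φ : TGainGraph V) : ℝ :=
  ⨆ i, |Φ.herm.eigenvalues i|

/-- Switching equivalence of two gain graphs on the same vertex set: same
underlying graph, and adjacency matrices conjugate by a diagonal unitary. -/
def SwitchEquiv (Φ₁ Φ₂ : TGainGraph V) : Prop :=
  Φ₁.G = Φ₂.G ∧ ∃ U : Matrix V V ℂ, U.IsDiag ∧ U ∈ Matrix.unitaryGroup V ℂ ∧
    Φ₁.A = U * Φ₂.A * Uᴴ

/-- `Φ` switches to the all-ones gain on its underlying graph,
i.e. `Φ ∼ (G, 1)` (equivalently, `Φ` is balanced). -/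
def SwitchesToOne (Φ : TGainGraph V) : Prop :=
  ∃ U : Matrix V V ℂ, U.IsDiag ∧ U ∈ Matrix.unitaryGroup V ℂ ∧
    Φ.A = U * (Φ.G.adjMatrix ℂ) * Uᴴ

/-- `Φ ∼ (K_{a,b}, 1)`: the underlying graph is (isomorphic to) the complete
bipartite graph `K_{a,b}` via some bijection `e`, and the gains switch to `1`. -/
def SwitchEquivToCompleteBipartite (Φ : TGainGraph V) (a b : ℕ) : Prop :=
  (∃ e : V ≃ (Fin a ⊕ Fin b), ∀ i j, Φ.G.Adj i j ↔
      (completeBipartiteGraph (Fin a) (Fin b)).Adj (e i) (e j)) ∧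
  SwitchesToOne Φ

/-- The gain of a walk: the product of the gains of its edges in order. -/
noncomputable def walkGain (Φ : TGainGraph V) {u v : V} (w : Φ.G.Walk u v) : ℂ :=
  (w.darts.map (fun d => Φ.A d.fst d.snd)).prod

/-- A gain graph is balanced if every cycle has gain `1`. -/
def Balanced (Φ : TGainGraph V) : Prop :=
  ∀ (u : V) (w : Φ.G.Walk u u), w.IsCycle → Φ.walkGain w = 1

/-- The restriction of a gain graph to a set of vertices. -/
noncomputable def restrict (Φ : TGainGraph V) (s : Set V) : TGainGraph s where
  G := Φ.G.induce s
  A := Φ.A.submatrix (Subtype.val) (Subtype.val)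
  herm := Φ.herm.submatrix _
  unitGain := fun i j h => Φ.unitGain i j h
  zeroGain := fun i j h => Φ.zeroGain i j h

/-- The vertex set of the connected component `c`. -/
def componentSet (Φ : TGainGraph V) (c : Φ.G.ConnectedComponent) : Set V :=
  {v | Φ.G.connectedComponentMk v = c}

/-- Every connected component of `Φ` is either an isolated vertex or a balanced
complete bipartite gain graph `(K_{k,k},1)` with a perfect matching. -/
def ComponentsBalancedCompleteBipartitePM (Φ : TGainGraph V) : Prop :=
  ∀ c : Φ.G.ConnectedComponent,
    (∀ v ∈ Φ.componentSet c, ∀ w, ¬ Φ.G.Adj v w) ∨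
    ∃ k : ℕ, 0 < k ∧
      (Φ.restrict (Φ.componentSet c)).SwitchEquivToCompleteBipartite k k

/-- The matching number of a graph. -/
noncomputable def matchingNumber (G : SimpleGraph V) : ℕ :=
  sSup {k | ∃ M : G.Subgraph, M.IsMatching ∧ M.edgeSet.ncard = k}

/-- The vertex cover number of a graph. -/
noncomputable def coverNumber (G : SimpleGraph V) : ℕ :=
  sInf {k | ∃ s : Finset V, s.card = k ∧ ∀ i j, G.Adj i j → i ∈ s ∨ j ∈ s}

/-- The number of odd cycles of a graph (counted by their edge sets). -/
noncomputable def oddCycleCount (G : SimpleGraph V) : ℕ :=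
  Set.ncard {s : Set (Sym2 V) | ∃ (u : V) (w : G.Walk u u),
    w.IsCycle ∧ Odd w.length ∧ s = {e | e ∈ w.edges}}

end TGainGraph

section AuxLemmas

open SimpleGraph Complex

variable {V : Type*} [Fintype V] [DecidableEq V]

lemma walkGain_nil (Φ : TGainGraph V) {a : V} :
    Φ.walkGain (SimpleGraph.Walk.nil : Φ.G.Walk a a) = 1 := rfl

lemma walkGain_cons (Φ : TGainGraph V) {a b c : V} (h : Φ.G.Adj a b) (p : Φ.G.Walk b c) :
    Φ.walkGain (SimpleGraph.Walk.cons h p) = Φ.A a b * Φ.walkGain p := by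
  simp [TGainGraph.walkGain, SimpleGraph.Walk.darts_cons]

lemma walkGain_append (Φ : TGainGraph V) {a b c : V} (p : Φ.G.Walk a b) (q : Φ.G.Walk b c) :
    Φ.walkGain (p.append q) = Φ.walkGain p * Φ.walkGain q := by
  simp [TGainGraph.walkGain, SimpleGraph.Walk.darts_append]

lemma walkGain_concat (Φ : TGainGraph V) {a b c : V} (p : Φ.G.Walk a b) (h : Φ.G.Adj b c) :
    Φ.walkGain (p.concat h) = Φ.walkGain p * Φ.A b c := by
  simp [TGainGraph.walkGain, SimpleGraph.Walk.darts_concat]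

lemma abs_walkGain (Φ : TGainGraph V) {a b : V} (p : Φ.G.Walk a b) :
    ‖Φ.walkGain p‖ = 1 := by
  induction p with
  | nil => simp [walkGain_nil]
  | cons h p ih =>
      rw [walkGain_cons, norm_mul, ih, Φ.unitGain _ _ h, one_mul]

lemma conj_mul_self_walkGain (Φ : TGainGraph V) {a b : V} (p : Φ.G.Walk a b) :
    (starRingEnd ℂ) (Φ.walkGain p) * Φ.walkGain p = 1 := by
  have := Complex.normSq_eq_norm_sq (Φ.walkGain p)
  rw [abs_walkGain] at this
  rw [← Complex.normSq_eq_conj_mul_self, this]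
  norm_num

end AuxLemmas
section TreeGain

open SimpleGraph

variable {V : Type*} [Fintype V] [DecidableEq V] (Φ : TGainGraph V)
  {T : SimpleGraph V} (hle : T ≤ Φ.G) (htree : T.IsTree) (r : V)

noncomputable def tpath (v : V) : T.Walk r v :=
  (htree.existsUnique_path r v).exists.choose

lemma tpath_isPath (v : V) : (tpath htree r v).IsPath :=
  (htree.existsUnique_path r v).exists.choose_spec

lemma tpath_unique {v : V} (p : T.Walk r v) (hp : p.IsPath) : p = tpath htree r v :=
  (htree.existsUnique_path r v).unique hp (tpath_isPath htree r v)

noncomputable def tgain (v : V) : ℂ :=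
  Φ.walkGain ((tpath htree r v).map (SimpleGraph.Hom.ofLE hle))

lemma conj_mul_self_tgain (v : V) :
    (starRingEnd ℂ) (tgain Φ hle htree r v) * tgain Φ hle htree r v = 1 :=
  conj_mul_self_walkGain Φ _

lemma A_conj_of_adj {i j : V} (h : Φ.G.Adj i j) :
    Φ.A j i = (starRingEnd ℂ) (Φ.A i j) := by
  have := congrFun (congrFun Φ.herm j) i
  simpa [Matrix.conjTranspose_apply] using this.symm

lemma conj_A_mul_self (Φ : TGainGraph V) {i j : V} (h : Φ.G.Adj i j) :
    (starRingEnd ℂ) (Φ.A i j) * Φ.A i j = 1 := by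
  have h1 := Complex.normSq_eq_norm_sq (Φ.A i j)
  rw [Φ.unitGain _ _ h] at h1
  rw [← Complex.normSq_eq_conj_mul_self, h1]
  norm_num

lemma gain_dart {i j : V} (hij : T.Adj i j) :
    tgain Φ hle htree r i * Φ.A i j * (starRingEnd ℂ) (tgain Φ hle htree r j) = 1 := by
  by_cases hj : j ∈ (tpath htree r i).support
  · have hsplit := ((tpath htree r i).take_spec hj).symm
    have htake : ((tpath htree r i).takeUntil j hj).IsPath :=
      (tpath_isPath htree r i).takeUntil hj
    have hdrop : ((tpath htree r i).dropUntil j hj).IsPath :=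
      (tpath_isPath htree r i).dropUntil hj
    have h1 : (tpath htree r i).takeUntil j hj = tpath htree r j :=
      tpath_unique htree r _ htake
    have hsingle : (Walk.cons hij.symm Walk.nil : T.Walk j i).IsPath := by
      simp [Walk.cons_isPath_iff, hij.ne']
    have h2 : (tpath htree r i).dropUntil j hj = Walk.cons hij.symm Walk.nil :=
      (htree.existsUnique_path j i).unique hdrop hsingle
    have hgi : tgain Φ hle htree r i = tgain Φ hle htree r j * Φ.A j i := by
      unfold tgain
      rw [hsplit, Walk.map_append, walkGain_append, h1, h2]
      congr 1
      simp [Walk.map_cons, walkGain_cons, walkGain_nil]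
    rw [hgi, A_conj_of_adj Φ (hle hij)]
    have hc1 := conj_mul_self_tgain Φ hle htree r j
    have hc2 := conj_A_mul_self Φ (hle hij)
    set g := tgain Φ hle htree r j
    set z := Φ.A i j
    calc g * (starRingEnd ℂ) z * z * (starRingEnd ℂ) g
        = ((starRingEnd ℂ) g * g) * ((starRingEnd ℂ) z * z) := by ring
      _ = 1 := by rw [hc1, hc2, one_mul]
  · have hpath : ((tpath htree r i).concat hij).IsPath := by
      rw [← Walk.isPath_reverse_iff, Walk.reverse_concat, Walk.cons_isPath_iff]
      refine ⟨(tpath_isPath htree r i).reverse, ?_⟩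
      simpa [Walk.support_reverse] using hj
    have h1 : tpath htree r j = (tpath htree r i).concat hij :=
      (tpath_unique htree r _ hpath).symm
    have hgj : tgain Φ hle htree r j = tgain Φ hle htree r i * Φ.A i j := by
      unfold tgain
      rw [h1, Walk.concat_eq_append, Walk.map_append, walkGain_append]
      congr 1
      simp [Walk.map_cons, walkGain_cons, walkGain_nil]
    have hc1 := conj_mul_self_tgain Φ hle htree r j
    rw [hgj] at hc1 ⊢
    calc tgain Φ hle htree r i * Φ.A i j * (starRingEnd ℂ) (tgain Φ hle htree r i * Φ.A i j)
        = (starRingEnd ℂ) (tgain Φ hle htree r i * Φ.A i j) *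
            (tgain Φ hle htree r i * Φ.A i j) := by ring
      _ = 1 := hc1

lemma gain_treewalk {a b : V} (p : Φ.G.Walk a b) (hp : ∀ f ∈ p.edges, f ∈ T.edgeSet) :
    Φ.walkGain p = (starRingEnd ℂ) (tgain Φ hle htree r a) * tgain Φ hle htree r b := by
  induction p with
  | nil => exact (walkGain_nil Φ).trans (conj_mul_self_tgain Φ hle htree r _).symm
  | @cons a c b h q ih =>
      have hT : T.Adj a c := T.mem_edgeSet.1 (hp _ (by simp [Walk.edges_cons]))
      rw [walkGain_cons, ih (fun f hf => hp f (by simp [Walk.edges_cons, hf]))]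
      have hB := gain_dart Φ hle htree r hT
      have habs := conj_mul_self_tgain Φ hle htree r a
      have key : Φ.A a c * (starRingEnd ℂ) (tgain Φ hle htree r c)
          = (starRingEnd ℂ) (tgain Φ hle htree r a) := by
        linear_combination (starRingEnd ℂ) (tgain Φ hle htree r a) * hB -
          Φ.A a c * (starRingEnd ℂ) (tgain Φ hle htree r c) * habs
      rw [← mul_assoc, key]

end TreeGain
section CycleGain

open SimpleGraph

variable {V : Type*} [Fintype V] [DecidableEq V]

lemma path_last_edge {G : SimpleGraph V} {j : V} :
    ∀ {a b : V} (p : G.Walk a b), p.support.Nodup → s(j, b) ∈ p.edges →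
      ∃ (h : G.Adj j b) (q : G.Walk a j), p = q.concat h := by
  intro a b p
  induction p with
  | nil => intro _ he; simp at he
  | @cons x y z h q ih =>
      intro hnd he
      rw [SimpleGraph.Walk.edges_cons, List.mem_cons] at he
      have hnd' : q.support.Nodup ∧ x ∉ q.support := by
        rw [SimpleGraph.Walk.support_cons] at hnd
        exact ⟨(List.nodup_cons.mp hnd).2, (List.nodup_cons.mp hnd).1⟩
      rcases he with he | he
      · rw [Sym2.eq_iff] at he
        rcases he with ⟨hjx, hzy⟩ | ⟨hjy, hzx⟩
        · subst hjx; subst hzy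
          have hnil : q = SimpleGraph.Walk.nil :=
            (SimpleGraph.Walk.isPath_iff_eq_nil (p := q)).mp ((SimpleGraph.Walk.isPath_def q).mpr hnd'.1)
          subst hnil
          exact ⟨h, SimpleGraph.Walk.nil, rfl⟩
        · exfalso
          have : x ∈ q.support := by rw [← hzx]; exact q.end_mem_support
          exact hnd'.2 this
      · obtain ⟨h', q', rfl⟩ := ih hnd'.1 he
        exact ⟨h', SimpleGraph.Walk.cons h q', by rw [SimpleGraph.Walk.concat_cons]⟩

variable (Φ : TGainGraph V) {T : SimpleGraph V} (hle : T ≤ Φ.G) (htree : T.IsTree) (r : V)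

lemma closed_walk_gain {i j : V} (c : Φ.G.Walk i i) (hc : c.IsCycle)
    (he : s(i, j) ∈ c.edges)
    (hT : ∀ f ∈ c.edges, f ≠ s(i, j) → f ∈ T.edgeSet) :
    Φ.walkGain c
        = tgain Φ hle htree r i * Φ.A i j * (starRingEnd ℂ) (tgain Φ hle htree r j) ∨
    Φ.walkGain c
        = (starRingEnd ℂ)
            (tgain Φ hle htree r i * Φ.A i j * (starRingEnd ℂ) (tgain Φ hle htree r j)) := by
  cases c with
  | nil => simp at he
  | @cons x y z h p =>
      -- h : Φ.G.Adj i y, p : Φ.G.Walk y i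
      rw [SimpleGraph.Walk.edges_cons, List.mem_cons] at he
      have hnodup : (s(i, y) :: p.edges).Nodup := by
        have := hc.isCircuit.isTrail.edges_nodup
        rwa [SimpleGraph.Walk.edges_cons] at this
      have hpnodup : p.support.Nodup := by
        have := hc.support_nodup
        rwa [SimpleGraph.Walk.support_cons] at this
      rcases he with he | he
      · -- first edge is s(i,j), so y = j
        rw [Sym2.eq_iff] at he
        obtain rfl : y = j := by
          rcases he with ⟨-, hjy⟩ | ⟨hiy, hji⟩
          · exact hjy.symm
          · exact absurd hiy h.ne
        rw [List.nodup_cons] at hnodup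
        have hpe : ∀ f ∈ p.edges, f ∈ T.edgeSet := by
          intro f hf
          refine hT f (by simp [SimpleGraph.Walk.edges_cons, hf]) ?_
          rintro rfl
          exact hnodup.1 hf
        left
        rw [walkGain_cons, gain_treewalk Φ hle htree r p hpe]
        ring
      · -- s(i,j) is in p, so it is the last edge of p
        rw [Sym2.eq_swap] at he
        obtain ⟨hadj, q, rfl⟩ := path_last_edge p hpnodup he
        have hfirst : s(i, y) ∈ T.edgeSet := by
          refine hT _ (by simp [SimpleGraph.Walk.edges_cons]) ?_
          intro hcon
          rw [List.nodup_cons, hcon] at hnodup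
          rw [← Sym2.eq_swap] at he
          exact hnodup.1 he
        have hqe : ∀ f ∈ q.edges, f ∈ T.edgeSet := by
          intro f hf
          have hfp : f ∈ (q.concat hadj).edges := by
            rw [SimpleGraph.Walk.edges_concat, List.concat_eq_append, List.mem_append]
            exact Or.inl hf
          refine hT f (by rw [SimpleGraph.Walk.edges_cons]; exact List.mem_cons.mpr (Or.inr hfp)) ?_
          rintro rfl
          rw [List.nodup_cons] at hnodup
          have : (q.edges ++ [s(j, i)]).Nodup := by
            have := hnodup.2
            rwa [SimpleGraph.Walk.edges_concat, List.concat_eq_append] at this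
          rw [List.nodup_append] at this
          exact this.2.2 _ hf _ (List.mem_singleton_self _) Sym2.eq_swap
        right
        rw [walkGain_cons, walkGain_concat, gain_treewalk Φ hle htree r q hqe]
        have hB := gain_dart Φ hle htree r (T.mem_edgeSet.1 hfirst)
        have habs := conj_mul_self_tgain Φ hle htree r i
        have key : Φ.A i y * (starRingEnd ℂ) (tgain Φ hle htree r y)
            = (starRingEnd ℂ) (tgain Φ hle htree r i) := by
          linear_combination (starRingEnd ℂ) (tgain Φ hle htree r i) * hB -
            Φ.A i y * (starRingEnd ℂ) (tgain Φ hle htree r y) * habs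
        rw [_root_.map_mul, _root_.map_mul, Complex.conj_conj, ← A_conj_of_adj Φ hadj.symm]
        linear_combination (tgain Φ hle htree r j * Φ.A j i) * key

lemma cycle_gain {i j : V} {v : V} (c : Φ.G.Walk v v) (hc : c.IsCycle)
    (he : s(i, j) ∈ c.edges)
    (hT : ∀ f ∈ c.edges, f ≠ s(i, j) → f ∈ T.edgeSet) :
    (Φ.walkGain c).re
      = (tgain Φ hle htree r i * Φ.A i j * (starRingEnd ℂ) (tgain Φ hle htree r j)).re := by
  have hi : i ∈ c.support := c.fst_mem_support_of_mem_edges he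
  have hperm : ((c.rotate i hi).darts.map fun d => Φ.A d.fst d.snd).prod
      = (c.darts.map fun d => Φ.A d.fst d.snd).prod :=
    List.Perm.prod_eq (((c.rotate_darts i hi).map _).perm)
  have hgain : Φ.walkGain (c.rotate i hi) = Φ.walkGain c := hperm
  have hedges : ∀ f, f ∈ (c.rotate i hi).edges ↔ f ∈ c.edges := fun f =>
    (c.rotate_edges i hi).perm.mem_iff
  have := closed_walk_gain Φ hle htree r (c.rotate i hi) (hc.rotate hi)
    ((hedges _).2 he) (fun f hf hne => hT f ((hedges f).1 hf) hne)
  rw [hgain] at this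
  rcases this with h | h
  · rw [h]
  · rw [h, Complex.conj_re]

end CycleGain
section Spectral

variable {V : Type*} [Fintype V] [DecidableEq V]

lemma trace_A_zero (Φ : TGainGraph V) : Φ.A.trace = 0 := by
  have : ∀ i, Φ.A i i = 0 := fun i => Φ.zeroGain i i (Φ.G.irrefl)
  simp [Matrix.trace, Matrix.diag, this]

lemma sum_eigenvalues_eq_zero (Φ : TGainGraph V) : ∑ i, Φ.herm.eigenvalues i = 0 := by
  have h2 : Φ.A.trace = ∑ i, ((Φ.herm.eigenvalues i : ℝ) : ℂ) := by
    conv_lhs => rw [Φ.herm.spectral_theorem, Unitary.conjStarAlgAut_apply]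
    rw [Matrix.trace_mul_cycle,
      Matrix.mem_unitaryGroup_iff'.mp (Matrix.IsHermitian.eigenvectorUnitary Φ.herm).2, one_mul,
      Matrix.trace_diagonal]
    rfl
  rw [trace_A_zero] at h2
  have h3 : ((∑ i, Φ.herm.eigenvalues i : ℝ) : ℂ) = 0 := by push_cast; rw [← h2]
  exact_mod_cast h3

lemma two_eigenvalue_le_energy (Φ : TGainGraph V) (i₀ : V) :
    2 * Φ.herm.eigenvalues i₀ ≤ Φ.energy := by
  have hsum := sum_eigenvalues_eq_zero Φ
  rw [← Finset.add_sum_erase _ _ (Finset.mem_univ i₀)] at hsum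
  unfold TGainGraph.energy
  rw [← Finset.add_sum_erase _ _ (Finset.mem_univ i₀)]
  have h1 : Φ.herm.eigenvalues i₀ ≤ |Φ.herm.eigenvalues i₀| := le_abs_self _
  have h2 : - ∑ j ∈ Finset.univ.erase i₀, Φ.herm.eigenvalues j
      ≤ ∑ j ∈ Finset.univ.erase i₀, |Φ.herm.eigenvalues j| := by
    rw [← Finset.sum_neg_distrib]
    exact Finset.sum_le_sum fun j _ => neg_le_abs _
  linarith

lemma herm_quadform_le {A : Matrix V V ℂ} (hA : A.IsHermitian) (μ : ℝ)
    (hmax : ∀ i, hA.eigenvalues i ≤ μ) (x : V → ℂ) :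
    (dotProduct (star x) (A *ᵥ x)).re
      ≤ μ * (dotProduct (star x) x).re := by
  have hdiag : (μ : ℂ) • (1 : Matrix V V ℂ)
        - Matrix.diagonal (RCLike.ofReal ∘ hA.eigenvalues)
      = Matrix.diagonal (fun i => ((μ - hA.eigenvalues i : ℝ) : ℂ)) := by
    rw [← Matrix.diagonal_one, ← Matrix.diagonal_smul, Matrix.diagonal_sub]
    ext i j
    by_cases hij : i = j
    · subst hij
      simp [Matrix.diagonal_apply_eq, Pi.smul_apply, smul_eq_mul, Complex.ofReal_sub]
    · simp [Matrix.diagonal_apply_ne _ hij]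
  have hM : ((μ : ℂ) • (1 : Matrix V V ℂ) - A).PosSemidef := by
    set W : Matrix V V ℂ := (Matrix.IsHermitian.eigenvectorUnitary hA : Matrix V V ℂ) with hW
    have hWW : W * star W = 1 :=
      Matrix.mem_unitaryGroup_iff.mp (Matrix.IsHermitian.eigenvectorUnitary hA).2
    have h1 : (μ : ℂ) • (1 : Matrix V V ℂ) = W * ((μ : ℂ) • 1) * star W := by
      rw [Matrix.mul_smul, mul_one, Matrix.smul_mul, hWW]
    rw [hA.spectral_theorem, Unitary.conjStarAlgAut_apply]
    rw [h1, ← Matrix.sub_mul, ← Matrix.mul_sub, hdiag]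
    have hpos : (Matrix.diagonal (fun i => ((μ - hA.eigenvalues i : ℝ) : ℂ))).PosSemidef :=
      Matrix.posSemidef_diagonal_iff.mpr fun i =>
        Complex.zero_le_real.mpr (sub_nonneg.mpr (hmax i))
    have := hpos.mul_mul_conjTranspose_same W
    rwa [← Matrix.star_eq_conjTranspose W] at this
  have hx := hM.dotProduct_mulVec_nonneg x
  rw [Matrix.sub_mulVec, Matrix.smul_mulVec, Matrix.one_mulVec,
    dotProduct_sub, dotProduct_smul] at hx
  rw [Complex.le_def] at hx
  have h := hx.1
  simp only [Complex.zero_re, Complex.sub_re, smul_eq_mul, Complex.mul_re,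
    Complex.ofReal_re, Complex.ofReal_im, zero_mul, sub_zero] at h
  linarith

end Spectral
section QuadForm

open SimpleGraph

variable {V : Type*} [Fintype V] [DecidableEq V] (Φ : TGainGraph V)
  {T : SimpleGraph V} (hle : T ≤ Φ.G) (htree : T.IsTree) (r : V)

noncomputable def xvec : V → ℂ := fun v => (starRingEnd ℂ) (tgain Φ hle htree r v)

lemma quadform_eq (u : Sym2 V → V) (w : ∀ e : Sym2 V, Φ.G.Walk (u e) (u e))
    (hw : ∀ e ∈ Φ.G.edgeSet \ T.edgeSet, (w e).IsCycle ∧ e ∈ (w e).edges ∧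
      ∀ f ∈ (w e).edges, f ≠ e → f ∈ T.edgeSet) :
    dotProduct (star (xvec Φ hle htree r)) (Φ.A *ᵥ (xvec Φ hle htree r))
      = (((2 * (T.edgeFinset.card : ℝ)
          + 2 * ∑ e ∈ (Φ.G.edgeSet \ T.edgeSet).toFinset, (Φ.walkGain (w e)).re : ℝ)) : ℂ) := by
  classical
  set g : V → ℂ := tgain Φ hle htree r with hg
  set t : V × V → ℂ := fun p => g p.1 * Φ.A p.1 p.2 * (starRingEnd ℂ) (g p.2) with ht
  have hexp : dotProduct (star (xvec Φ hle htree r)) (Φ.A *ᵥ (xvec Φ hle htree r))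
      = ∑ p ∈ Finset.univ ×ˢ Finset.univ, t p := by
    rw [Finset.sum_product]
    rw [dotProduct]
    refine Finset.sum_congr rfl fun i _ => ?_
    rw [Matrix.mulVec, dotProduct, Finset.mul_sum]
    refine Finset.sum_congr rfl fun j _ => ?_
    simp only [Pi.star_apply, xvec, Complex.star_def, Complex.conj_conj, ht, hg]
    ring
  rw [hexp]
  rw [← Finset.sum_filter_add_sum_filter_not (Finset.univ ×ˢ Finset.univ)
    (fun p : V × V => T.Adj p.1 p.2) t]
  have hpart1 : ∑ p ∈ (Finset.univ ×ˢ Finset.univ).filter (fun p : V × V => T.Adj p.1 p.2), t p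
      = ((2 * (T.edgeFinset.card : ℝ) : ℝ) : ℂ) := by
    have hones : ∀ p ∈ (Finset.univ ×ˢ Finset.univ).filter (fun p : V × V => T.Adj p.1 p.2),
        t p = 1 := by
      rintro ⟨i, j⟩ hp
      rw [Finset.mem_filter] at hp
      exact gain_dart Φ hle htree r hp.2
    rw [Finset.sum_congr rfl hones, Finset.sum_const, nsmul_eq_mul, mul_one]
    have hcard : ((Finset.univ ×ˢ Finset.univ).filter
        (fun p : V × V => T.Adj p.1 p.2)).card = ∑ v, T.degree v := by
      rw [Finset.card_filter, Finset.sum_product]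
      refine Finset.sum_congr rfl fun i _ => ?_
      rw [SimpleGraph.degree, SimpleGraph.neighborFinset_eq_filter, Finset.card_filter]
    rw [hcard, SimpleGraph.sum_degrees_eq_twice_card_edges]
    push_cast
    ring
  rw [hpart1]
  have hpart2 : ∑ p ∈ (Finset.univ ×ˢ Finset.univ).filter (fun p : V × V => ¬ T.Adj p.1 p.2), t p
      = ((2 * ∑ e ∈ (Φ.G.edgeSet \ T.edgeSet).toFinset, (Φ.walkGain (w e)).re : ℝ) : ℂ) := by
    set P₁ := (Finset.univ ×ˢ Finset.univ).filter (fun p : V × V => ¬ T.Adj p.1 p.2) with hP₁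
    rw [← Finset.sum_filter_add_sum_filter_not P₁ (fun p : V × V => Φ.G.Adj p.1 p.2) t]
    have hzero : ∑ p ∈ P₁.filter (fun p : V × V => ¬ Φ.G.Adj p.1 p.2), t p = 0 := by
      refine Finset.sum_eq_zero ?_
      rintro ⟨i, j⟩ hp
      rw [Finset.mem_filter] at hp
      simp only [ht]
      rw [Φ.zeroGain i j hp.2]
      ring
    rw [hzero, add_zero]
    set P₂ := P₁.filter (fun p : V × V => Φ.G.Adj p.1 p.2) with hP₂
    have hmaps : ∀ p ∈ P₂, s(p.1, p.2) ∈ (Φ.G.edgeSet \ T.edgeSet).toFinset := by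
      rintro ⟨i, j⟩ hp
      simp only [hP₂, hP₁, Finset.mem_filter] at hp
      rw [Set.mem_toFinset, Set.mem_diff]
      exact ⟨Φ.G.mem_edgeSet.2 hp.2, fun hcon => hp.1.2 (T.mem_edgeSet.1 hcon)⟩
    rw [← Finset.sum_fiberwise_of_maps_to hmaps t]
    have hfiber : ∀ e ∈ (Φ.G.edgeSet \ T.edgeSet).toFinset,
        ∑ p ∈ P₂.filter (fun p : V × V => s(p.1, p.2) = e), t p
          = ((2 * (Φ.walkGain (w e)).re : ℝ) : ℂ) := by
      intro e he
      revert he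
      refine Sym2.ind (fun i j => ?_) e
      intro he
      have he' : s(i, j) ∈ Φ.G.edgeSet \ T.edgeSet := Set.mem_toFinset.1 he
      obtain ⟨hcyc, hemem, hoth⟩ := hw _ he'
      have hij : Φ.G.Adj i j := Φ.G.mem_edgeSet.1 he'.1
      have hnT : ¬ T.Adj i j := fun hcon => he'.2 (T.mem_edgeSet.2 hcon)
      have hset : P₂.filter (fun p : V × V => s(p.1, p.2) = s(i, j)) = {(i, j), (j, i)} := by
        ext ⟨a, b⟩
        simp only [hP₂, hP₁, Finset.mem_filter, Finset.mem_product, Finset.mem_univ,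
          true_and, Finset.mem_insert, Finset.mem_singleton, Prod.mk.injEq, Sym2.eq_iff]
        constructor
        · rintro ⟨⟨-, -⟩, h | h⟩
          · exact Or.inl h
          · exact Or.inr h
        · rintro (⟨rfl, rfl⟩ | ⟨rfl, rfl⟩)
          · exact ⟨⟨hnT, hij⟩, Or.inl ⟨rfl, rfl⟩⟩
          · exact ⟨⟨fun hcon => hnT hcon.symm, hij.symm⟩, Or.inr ⟨rfl, rfl⟩⟩
      rw [hset]
      have hne : ((i, j) : V × V) ≠ (j, i) := fun hcon => hij.ne (congrArg Prod.fst hcon)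
      rw [Finset.sum_pair hne]
      have hconj : t (j, i) = (starRingEnd ℂ) (t (i, j)) := by
        simp only [ht]
        rw [_root_.map_mul, _root_.map_mul, Complex.conj_conj,
          A_conj_of_adj Φ hij]
        ring
      rw [hconj, Complex.add_conj]
      have hre := cycle_gain Φ hle htree r (w s(i, j)) hcyc hemem hoth
      rw [← hre]
    rw [Finset.sum_congr rfl hfiber]
    push_cast
    rw [Finset.mul_sum]
  rw [hpart2]
  push_cast
  ring

end QuadForm
section SwitchOne

open SimpleGraph

variable {V : Type*} [Fintype V] [DecidableEq V]

lemma diag_unitary_norm {U : Matrix V V ℂ} (hdiag : U.IsDiag)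
    (hU : U ∈ Matrix.unitaryGroup V ℂ) (v : V) :
    (starRingEnd ℂ) (U v v) * U v v = 1 := by
  have h1 : (star U * U) v v = 1 := by
    rw [Matrix.mem_unitaryGroup_iff'.mp hU, Matrix.one_apply_eq]
  rw [← h1]
  conv_rhs => rw [← hdiag.diagonal_diag, Matrix.star_eq_conjTranspose,
    Matrix.diagonal_conjTranspose, Matrix.diagonal_mul_diagonal, Matrix.diagonal_apply_eq]
  rfl

lemma switch_A_entry (Φ : TGainGraph V) {U : Matrix V V ℂ} (hdiag : U.IsDiag)
    (hA : Φ.A = U * (Φ.G.adjMatrix ℂ) * Uᴴ) {i j : V} (h : Φ.G.Adj i j) :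
    Φ.A i j = U i i * (starRingEnd ℂ) (U j j) := by
  rw [hA, ← hdiag.diagonal_diag, Matrix.diagonal_conjTranspose,
    Matrix.mul_diagonal, Matrix.diagonal_mul, SimpleGraph.adjMatrix_apply, if_pos h]
  rw [Matrix.diagonal_apply_eq, Matrix.diagonal_apply_eq]
  simp [Matrix.diag]

lemma switch_walkGain (Φ : TGainGraph V) {U : Matrix V V ℂ} (hdiag : U.IsDiag)
    (hU : U ∈ Matrix.unitaryGroup V ℂ) (hA : Φ.A = U * (Φ.G.adjMatrix ℂ) * Uᴴ)
    {a b : V} (p : Φ.G.Walk a b) :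
    Φ.walkGain p = U a a * (starRingEnd ℂ) (U b b) := by
  induction p with
  | nil => rw [walkGain_nil, mul_comm]; exact (diag_unitary_norm hdiag hU _).symm
  | @cons a c b h q ih =>
      rw [walkGain_cons, ih, switch_A_entry Φ hdiag hA h]
      have := diag_unitary_norm hdiag hU c
      calc U a a * (starRingEnd ℂ) (U c c) * (U c c * (starRingEnd ℂ) (U b b))
          = ((starRingEnd ℂ) (U c c) * U c c) * (U a a * (starRingEnd ℂ) (U b b)) := by ring
        _ = U a a * (starRingEnd ℂ) (U b b) := by rw [this, one_mul]

lemma switch_closed_walkGain (Φ : TGainGraph V) {U : Matrix V V ℂ} (hdiag : U.IsDiag)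
    (hU : U ∈ Matrix.unitaryGroup V ℂ) (hA : Φ.A = U * (Φ.G.adjMatrix ℂ) * Uᴴ)
    {a : V} (p : Φ.G.Walk a a) : Φ.walkGain p = 1 := by
  rw [switch_walkGain Φ hdiag hU hA p, mul_comm]
  exact diag_unitary_norm hdiag hU a

lemma top_adjMatrix_poly :
    ((⊤ : SimpleGraph V).adjMatrix ℂ + 1)
        * ((⊤ : SimpleGraph V).adjMatrix ℂ - ((Fintype.card V : ℂ) - 1) • 1) = 0 := by
  ext i j
  rw [Matrix.mul_apply, Matrix.zero_apply]
  have h1 : ∀ k, ((⊤ : SimpleGraph V).adjMatrix ℂ + 1) i k = 1 := by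
    intro k
    by_cases hik : i = k
    · subst hik; simp
    · simp [Matrix.one_apply_ne hik, hik]
  have h2 : ∀ k, ((⊤ : SimpleGraph V).adjMatrix ℂ
      - ((Fintype.card V : ℂ) - 1) • 1) k j
      = (if k = j then -((Fintype.card V : ℂ) - 1) else 1) := by
    intro k
    by_cases hkj : k = j
    · subst hkj; simp
    · simp [Matrix.one_apply_ne hkj, hkj]
  simp only [h1, one_mul, h2]
  have h3 : ∀ x : V, (if x = j then -((Fintype.card V : ℂ) - 1) else 1)
      = (if x = j then -(Fintype.card V : ℂ) else 0) + 1 := by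
    intro x; split <;> ring
  rw [Finset.sum_congr rfl fun x _ => h3 x, Finset.sum_add_distrib,
    Finset.sum_ite_eq' Finset.univ j (fun _ => -(Fintype.card V : ℂ)),
    if_pos (Finset.mem_univ j), Finset.sum_const, Finset.card_univ, nsmul_eq_mul, mul_one]
  ring

end SwitchOne
section EqualityCase

open SimpleGraph

variable {V : Type*} [Fintype V] [DecidableEq V]

lemma switch_eigenvalues (Φ : TGainGraph V) (hG : Φ.G = ⊤) {U : Matrix V V ℂ}
    (hdiag : U.IsDiag) (hU : U ∈ Matrix.unitaryGroup V ℂ)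
    (hA : Φ.A = U * (Φ.G.adjMatrix ℂ) * Uᴴ) (i : V) :
    Φ.herm.eigenvalues i = -1 ∨ Φ.herm.eigenvalues i = (Fintype.card V : ℝ) - 1 := by
  set c : ℂ := (Fintype.card V : ℂ) - 1 with hc
  have hGB : Φ.G.adjMatrix ℂ = (⊤ : SimpleGraph V).adjMatrix ℂ := by
    ext a b
    simp [SimpleGraph.adjMatrix_apply, hG]
  have hB : ((⊤ : SimpleGraph V).adjMatrix ℂ + 1)
      * ((⊤ : SimpleGraph V).adjMatrix ℂ - c • 1) = 0 := by
    rw [hc]; exact top_adjMatrix_poly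
  have hUU : U * Uᴴ = 1 := by
    rw [← Matrix.star_eq_conjTranspose]; exact Matrix.mem_unitaryGroup_iff.mp hU
  have hUU' : Uᴴ * U = 1 := by
    rw [← Matrix.star_eq_conjTranspose]; exact Matrix.mem_unitaryGroup_iff'.mp hU
  have hpoly : (Φ.A + 1) * (Φ.A - c • 1) = 0 := by
    have e1 : Φ.A + 1 = U * ((⊤ : SimpleGraph V).adjMatrix ℂ + 1) * Uᴴ := by
      rw [Matrix.mul_add, Matrix.add_mul, mul_one, hUU, hA, hGB]
    have e2 : Φ.A - c • 1 = U * ((⊤ : SimpleGraph V).adjMatrix ℂ - c • 1) * Uᴴ := by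
      rw [Matrix.mul_sub, Matrix.sub_mul, Matrix.mul_smul, mul_one, Matrix.smul_mul, hUU,
        hA, hGB]
    rw [e1, e2]
    calc U * ((⊤ : SimpleGraph V).adjMatrix ℂ + 1) * Uᴴ
          * (U * ((⊤ : SimpleGraph V).adjMatrix ℂ - c • 1) * Uᴴ)
        = U * (((⊤ : SimpleGraph V).adjMatrix ℂ + 1) * ((Uᴴ * U)
            * (((⊤ : SimpleGraph V).adjMatrix ℂ - c • 1) * Uᴴ))) := by
          simp only [mul_assoc]
      _ = U * ((((⊤ : SimpleGraph V).adjMatrix ℂ + 1)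
            * ((⊤ : SimpleGraph V).adjMatrix ℂ - c • 1)) * Uᴴ) := by
          rw [hUU', one_mul, mul_assoc]
      _ = 0 := by rw [hB, zero_mul, mul_zero]
  set lam : ℝ := Φ.herm.eigenvalues i with hlam
  have hv := Φ.herm.mulVec_eigenvectorBasis i
  set v : V → ℂ := ⇑(Φ.herm.eigenvectorBasis i) with hvdef
  have hv0 : v ≠ 0 := fun hcon =>
    Φ.herm.eigenvectorBasis.orthonormal.ne_zero i (by ext k; exact congrFun hcon k)
  have hv' : Φ.A *ᵥ v = ((lam : ℂ)) • v := by
    rw [hv]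
    funext k
    simp only [Pi.smul_apply, smul_eq_mul, Complex.real_smul]
    rfl
  have h1 : (Φ.A - c • 1) *ᵥ v = ((lam : ℂ) - c) • v := by
    rw [Matrix.sub_mulVec, hv', Matrix.smul_mulVec, Matrix.one_mulVec]
    module
  have h2 : ((Φ.A + 1) * (Φ.A - c • 1)) *ᵥ v
      = (((lam : ℂ) + 1) * ((lam : ℂ) - c)) • v := by
    rw [← Matrix.mulVec_mulVec, h1, Matrix.mulVec_smul, Matrix.add_mulVec, hv',
      Matrix.one_mulVec]
    module
  rw [hpoly, Matrix.zero_mulVec] at h2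
  rcases smul_eq_zero.mp h2.symm with h | h
  · rcases mul_eq_zero.mp h with h' | h'
    · left
      have : ((lam + 1 : ℝ) : ℂ) = 0 := by push_cast; exact h'
      have := Complex.ofReal_eq_zero.mp this
      linarith
    · right
      have : ((lam - ((Fintype.card V : ℝ) - 1) : ℝ) : ℂ) = 0 := by push_cast [hc] at h' ⊢; exact h'
      have := Complex.ofReal_eq_zero.mp this
      linarith
  · exact absurd h hv0

lemma switch_energy (Φ : TGainGraph V) (hne : Nonempty V) (hG : Φ.G = ⊤) {U : Matrix V V ℂ}
    (hdiag : U.IsDiag) (hU : U ∈ Matrix.unitaryGroup V ℂ)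
    (hA : Φ.A = U * (Φ.G.adjMatrix ℂ) * Uᴴ) :
    Φ.energy = 2 * (Fintype.card V : ℝ) - 2 := by
  classical
  have hkey := switch_eigenvalues Φ hG hdiag hU hA
  set n : ℕ := Fintype.card V with hn
  have hn0 : (0 : ℝ) < n := by
    have := Fintype.card_pos_iff.mpr hne
    exact_mod_cast this
  have hn1 : (1 : ℝ) ≤ (n : ℝ) := by
    have : 1 ≤ n := Fintype.card_pos_iff.mpr hne
    exact_mod_cast this
  set f : V → ℝ := Φ.herm.eigenvalues with hf
  set P := Finset.univ.filter (fun i => f i = (n : ℝ) - 1) with hP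
  set Q := Finset.univ.filter (fun i => ¬ f i = (n : ℝ) - 1) with hQ
  have hPsum : ∑ i ∈ P, f i = (P.card : ℝ) * ((n : ℝ) - 1) := by
    rw [Finset.sum_congr rfl (fun i hi => (Finset.mem_filter.mp hi).2), Finset.sum_const,
      nsmul_eq_mul]
  have hQval : ∀ i ∈ Q, f i = -1 := by
    intro i hi
    rcases hkey i with h | h
    · exact h
    · exact absurd h (Finset.mem_filter.mp hi).2
  have hQsum : ∑ i ∈ Q, f i = -(Q.card : ℝ) := by
    rw [Finset.sum_congr rfl hQval, Finset.sum_const, nsmul_eq_mul]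
    ring
  have htr := sum_eigenvalues_eq_zero Φ
  rw [← Finset.sum_filter_add_sum_filter_not Finset.univ (fun i => f i = (n : ℝ) - 1) f]
    at htr
  rw [← hP, ← hQ, hPsum, hQsum] at htr
  have hcards : P.card + Q.card = n :=
    Finset.card_filter_add_card_filter_not (fun i => f i = (n : ℝ) - 1)
  have hcardsR : (P.card : ℝ) + (Q.card : ℝ) = (n : ℝ) := by exact_mod_cast hcards
  have hPabs : ∑ i ∈ P, |f i| = (P.card : ℝ) * ((n : ℝ) - 1) := by
    rw [Finset.sum_congr rfl (fun i hi => ?_), Finset.sum_const, nsmul_eq_mul]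
    rw [(Finset.mem_filter.mp hi).2, abs_of_nonneg (by linarith [hn1])]
  have hQabs : ∑ i ∈ Q, |f i| = (Q.card : ℝ) := by
    rw [Finset.sum_congr rfl (fun i hi => ?_), Finset.sum_const, nsmul_eq_mul, mul_one]
    rw [hQval i hi]
    norm_num
  have henergy : Φ.energy = (P.card : ℝ) * ((n : ℝ) - 1) + (Q.card : ℝ) := by
    unfold TGainGraph.energy
    rw [← Finset.sum_filter_add_sum_filter_not Finset.univ (fun i => f i = (n : ℝ) - 1)
      (fun i => |f i|), ← hP, ← hQ, hPabs, hQabs]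
  have ha1 : (P.card : ℝ) = 1 := by
    have h5 : (P.card : ℝ) * (n : ℝ) = 1 * (n : ℝ) := by linarith
    exact mul_right_cancel₀ (ne_of_gt hn0) h5
  rw [henergy, ha1]
  have : (Q.card : ℝ) = (n : ℝ) - 1 := by linarith
  rw [this]
  ring

end EqualityCase

open TGainGraph in
/-- Lower bound for the energy via the gains of the fundamental cycles with
respect to a spanning tree `T`:
`E(Φ) ≥ 2 ∑ⱼ Re(φ(Cⱼ)) + (5n − n² − 4)`, with equality when `Φ ∼ (K_n, 1)`. -/
theorem energy_ge_fundamental_cycles {V : Type*} [Fintype V] [DecidableEq V]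
    (Φ : TGainGraph V) (hconn : Φ.G.Connected)
    (T : SimpleGraph V) (hle : T ≤ Φ.G) (htree : T.IsTree)
    (u : Sym2 V → V) (w : ∀ e : Sym2 V, Φ.G.Walk (u e) (u e))
    (hw : ∀ e ∈ Φ.G.edgeSet \ T.edgeSet, (w e).IsCycle ∧ e ∈ (w e).edges ∧
      ∀ f ∈ (w e).edges, f ≠ e → f ∈ T.edgeSet) :
    2 * ∑ e ∈ (Φ.G.edgeSet \ T.edgeSet).toFinset, (Φ.walkGain (w e)).re
        + (5 * (Fintype.card V : ℝ) - (Fintype.card V : ℝ) ^ 2 - 4) ≤ Φ.energy ∧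
    ((Φ.G = ⊤ ∧ Φ.SwitchesToOne) →
      Φ.energy = 2 * ∑ e ∈ (Φ.G.edgeSet \ T.edgeSet).toFinset, (Φ.walkGain (w e)).re
        + (5 * (Fintype.card V : ℝ) - (Fintype.card V : ℝ) ^ 2 - 4)) := by
  
  classical
  have hne : Nonempty V := hconn.nonempty
  set r : V := Classical.arbitrary V with hr
  set n : ℕ := Fintype.card V with hn
  set D := (Φ.G.edgeSet \ T.edgeSet).toFinset with hD
  set S : ℝ := ∑ e ∈ D, (Φ.walkGain (w e)).re with hS
  have hn1 : 1 ≤ n := Fintype.card_pos_iff.mpr hne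
  have hn1R : (1 : ℝ) ≤ (n : ℝ) := by exact_mod_cast hn1
  have hTsub : T.edgeFinset ⊆ Φ.G.edgeFinset := SimpleGraph.edgeFinset_subset_edgeFinset.2 hle
  have hDeq : D = Φ.G.edgeFinset \ T.edgeFinset := by
    ext e
    simp [hD, Set.mem_toFinset, SimpleGraph.mem_edgeFinset]
  have hDcard : D.card + T.edgeFinset.card = Φ.G.edgeFinset.card := by
    rw [hDeq]; exact Finset.card_sdiff_add_card_eq_card hTsub
  have htcard : T.edgeFinset.card + 1 = n := htree.card_edgeFinset
  have htR : (T.edgeFinset.card : ℝ) = (n : ℝ) - 1 := by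
    have : ((T.edgeFinset.card + 1 : ℕ) : ℝ) = (n : ℝ) := by exact_mod_cast htcard
    push_cast at this
    linarith
  have hdeg : 2 * Φ.G.edgeFinset.card ≤ n * (n - 1) := by
    rw [← SimpleGraph.sum_degrees_eq_twice_card_edges]
    calc ∑ v, Φ.G.degree v ≤ ∑ _v : V, (n - 1) :=
          Finset.sum_le_sum fun v _ => Nat.le_sub_one_of_lt (Φ.G.degree_lt_card_verts v)
      _ = n * (n - 1) := by rw [Finset.sum_const, Finset.card_univ, smul_eq_mul, hn]
  have hdegR : 2 * ((D.card : ℝ) + ((n : ℝ) - 1)) ≤ (n : ℝ) * ((n : ℝ) - 1) := by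
    have h1 : ((2 * Φ.G.edgeFinset.card : ℕ) : ℝ) ≤ ((n * (n - 1) : ℕ) : ℝ) :=
      Nat.cast_le.2 hdeg
    have h2 : ((n - 1 : ℕ) : ℝ) = (n : ℝ) - 1 := by
      rw [Nat.cast_sub hn1]; norm_num
    push_cast [h2] at h1
    have h3 : (D.card : ℝ) + (T.edgeFinset.card : ℝ) = (Φ.G.edgeFinset.card : ℝ) := by
      exact_mod_cast hDcard
    rw [htR] at h3
    linarith
  have hSle : S ≤ (D.card : ℝ) := by
    rw [hS]
    calc ∑ e ∈ D, (Φ.walkGain (w e)).re ≤ ∑ _e ∈ D, (1 : ℝ) := by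
          refine Finset.sum_le_sum fun e _ => ?_
          calc (Φ.walkGain (w e)).re ≤ ‖Φ.walkGain (w e)‖ := Complex.re_le_norm _
            _ = 1 := abs_walkGain Φ _
      _ = D.card := by rw [Finset.sum_const, nsmul_eq_mul, mul_one]
  have hengnn : 0 ≤ Φ.energy := Finset.sum_nonneg fun i _ => abs_nonneg _
  obtain ⟨i₀, -, hmaxmem⟩ := Finset.exists_max_image Finset.univ Φ.herm.eigenvalues
    ⟨r, Finset.mem_univ r⟩
  have hmax : ∀ i, Φ.herm.eigenvalues i ≤ Φ.herm.eigenvalues i₀ := fun i =>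
    hmaxmem i (Finset.mem_univ i)
  have hray := herm_quadform_le Φ.herm (Φ.herm.eigenvalues i₀) hmax (xvec Φ hle htree r)
  rw [quadform_eq Φ hle htree r u w hw] at hray
  have hxx : dotProduct (star (xvec Φ hle htree r)) (xvec Φ hle htree r) = (n : ℂ) := by
    rw [dotProduct]
    have hone : ∀ i : V, star (xvec Φ hle htree r i) * xvec Φ hle htree r i = 1 := by
      intro i
      simp only [xvec, Complex.star_def, Complex.conj_conj]
      rw [mul_comm]
      exact conj_mul_self_tgain Φ hle htree r i
    have : ∀ i ∈ Finset.univ, star (xvec Φ hle htree r) i * xvec Φ hle htree r i = 1 :=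
      fun i _ => hone i
    rw [Finset.sum_congr rfl this, Finset.sum_const, Finset.card_univ, nsmul_eq_mul,
      mul_one, hn]
  rw [hxx, Complex.ofReal_re, Complex.natCast_re] at hray
  have hE := two_eigenvalue_le_energy Φ i₀
  have hrayR : 2 * ((n : ℝ) - 1) + 2 * S ≤ Φ.herm.eigenvalues i₀ * n := by
    rw [htR] at hray
    rw [hS, hD]
    linarith
  constructor
  · -- the inequality
    by_cases hn2 : 2 ≤ n
    · have hn2R : (2 : ℝ) ≤ (n : ℝ) := by exact_mod_cast hn2
      have hnpos : (0 : ℝ) < (n : ℝ) := by linarith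
      have c1 : (n : ℝ) * Φ.energy ≥ 4 * ((n : ℝ) - 1) + 4 * S := by
        have e1 : (n : ℝ) * (2 * Φ.herm.eigenvalues i₀) ≤ (n : ℝ) * Φ.energy :=
          mul_le_mul_of_nonneg_left hE (by linarith)
        nlinarith [hrayR]
      have hmul : (2 * (n : ℝ) - 4) * S ≤ (2 * (n : ℝ) - 4) * (D.card : ℝ) :=
        mul_le_mul_of_nonneg_left hSle (by linarith)
      have hl2 : (n : ℝ) - 2 ≥ 0 := by linarith
      have hld : 2 * (D.card : ℝ) ≤ ((n : ℝ) - 1) * ((n : ℝ) - 2) := by nlinarith [hdegR]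
      have hld2 : ((n : ℝ) - 2) * (2 * (D.card : ℝ))
          ≤ ((n : ℝ) - 2) * (((n : ℝ) - 1) * ((n : ℝ) - 2)) :=
        mul_le_mul_of_nonneg_left hld hl2
      have c2 : (n : ℝ) * (2 * S + (5 * (n : ℝ) - (n : ℝ) ^ 2 - 4))
          ≤ 4 * ((n : ℝ) - 1) + 4 * S := by nlinarith [hmul, hld2]
      have := le_trans c2 c1
      exact le_of_mul_le_mul_left this hnpos
    · have hn1' : n = 1 := by omega
      have hsub : ∀ a b : V, a = b := by
        intro a b
        have : Fintype.card V ≤ 1 := by rw [← hn, hn1']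
        exact Fintype.card_le_one_iff.mp this a b
      have hD0 : D = ∅ := by
        rw [Finset.eq_empty_iff_forall_notMem]
        intro e he
        rw [hD, Set.mem_toFinset] at he
        obtain ⟨he1, -⟩ := he
        revert he1
        refine Sym2.ind (fun a b => ?_) e
        intro hab
        exact (Φ.G.mem_edgeSet.1 hab).ne (hsub a b)
      have hS0 : S = 0 := by rw [hS, hD0, Finset.sum_empty]
      rw [hS0, hn1']
      norm_num
      exact hengnn
  · -- the equality case
    rintro ⟨hGtop, U, hdiag, hU, hA⟩
    have hEval : Φ.energy = 2 * (n : ℝ) - 2 := switch_energy Φ hne hGtop hdiag hU hA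
    have hgain1 : ∀ e ∈ D, (Φ.walkGain (w e)).re = (1 : ℝ) := by
      intro e _
      rw [switch_closed_walkGain Φ hdiag hU hA (w e)]
      exact Complex.one_re
    have hSval : S = (D.card : ℝ) := by
      rw [hS, Finset.sum_congr rfl hgain1, Finset.sum_const, nsmul_eq_mul, mul_one]
    have hmtop : Φ.G.edgeFinset.card = n.choose 2 := by
      have : Φ.G.edgeFinset = (⊤ : SimpleGraph V).edgeFinset := by
        ext e
        simp [SimpleGraph.mem_edgeFinset, hGtop]
      rw [this, SimpleGraph.card_edgeFinset_top_eq_card_choose_two, hn]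
    have hmR : (Φ.G.edgeFinset.card : ℝ) = (n : ℝ) * ((n : ℝ) - 1) / 2 := by
      rw [hmtop, Nat.cast_choose_two]
    have hlR : (D.card : ℝ) = (n : ℝ) * ((n : ℝ) - 1) / 2 - ((n : ℝ) - 1) := by
      have h3 : (D.card : ℝ) + (T.edgeFinset.card : ℝ) = (Φ.G.edgeFinset.card : ℝ) := by
        exact_mod_cast hDcard
      rw [htR, hmR] at h3
      linarith
    rw [hEval, hSval, hlR]
    ring
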